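/- Let a ≥ 0 be an integer and let A ∈ GLₙ(L) with v(det A) = 0. Then every entry of A has t-adic valuation ≥ −a if and only if there exists a dominant μ' ∈ ℤⁿ with μ' ≤ ((n−1)a, −a, −a, …, −a) such that A ∈ K·D(μ')·K. (Claim in the proof of the proposition that S_λ is the colimit of the S_{λ,η}: for μ = ((n−1)a, −a, …, −a), an element lies in Gr_{GLₙ, ≤μ} if and only if all entries of a representing matrix have valuation ≥ −a.) -/

import Mathlib

noncomputable section

/-- The subring `R = k⟦t⟧` of the field of Laurent series `L = k((t))`, i.e. the image
of the power series ring. -/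
def Rsub (k : Type) [Field k] : Subring (LaurentSeries k) :=
  (HahnSeries.ofPowerSeries ℤ k).range

/-- The element `t ∈ k((t))`. -/
def tL (k : Type) [Field k] : LaurentSeries k := HahnSeries.single (1 : ℤ) 1

/-- The diagonal matrix `D(λ) = diag(t^{λ₁}, …, t^{λₙ}) ∈ GLₙ(k((t)))`. -/
def Dmat (k : Type) [Field k] (n : ℕ) (lam : Fin n → ℤ) :
    Matrix (Fin n) (Fin n) (LaurentSeries k) :=
  Matrix.diagonal fun i => (tL k) ^ (lam i)

/-- `K = GLₙ(k⟦t⟧) ⊆ GLₙ(k((t)))`: matrices with entries in `k⟦t⟧` admitting a (two-sided)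
inverse with entries in `k⟦t⟧`. -/
def Kset (k : Type) [Field k] (n : ℕ) : Set (Matrix (Fin n) (Fin n) (LaurentSeries k)) :=
  {A | ∃ B : Matrix (Fin n) (Fin n) (LaurentSeries k),
    (∀ i j, A i j ∈ Rsub k) ∧ (∀ i j, B i j ∈ Rsub k) ∧ A * B = 1 ∧ B * A = 1}

/-- `U(L)`: upper triangular matrices over `k((t))` with all diagonal entries equal to 1. -/
def Uset (k : Type) [Field k] (n : ℕ) : Set (Matrix (Fin n) (Fin n) (LaurentSeries k)) :=
  {u | (∀ i, u i i = 1) ∧ ∀ i j : Fin n, j < i → u i j = 0}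

/-- A tuple `μ ∈ ℤⁿ` is dominant if `μ₁ ≥ μ₂ ≥ ⋯ ≥ μₙ`. -/
def DominantT {n : ℕ} (μ : Fin n → ℤ) : Prop := ∀ i j : Fin n, i ≤ j → μ j ≤ μ i

/-- The dominance order on `ℤⁿ`: `λ ≤ μ` iff all proper partial sums of `λ` are at most
those of `μ` and the total sums agree. -/
def leT {n : ℕ} (lam μ : Fin n → ℤ) : Prop :=
  (∀ j : Fin n, ∑ i ∈ Finset.univ.filter (· ≤ j), lam i ≤
    ∑ i ∈ Finset.univ.filter (· ≤ j), μ i) ∧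
  ∑ i, lam i = ∑ i, μ i

/-! ### Auxiliary lemmas on Laurent series -/

variable {k : Type} [Field k]

lemma tL_zpow (m : ℤ) : tL k ^ m = HahnSeries.single m (1 : k) :=
  (RatFunc.single_zpow m).symm

lemma tL_zpow_ne_zero (m : ℤ) : (tL k ^ m : LaurentSeries k) ≠ 0 := by
  rw [tL_zpow]; exact HahnSeries.single_ne_zero one_ne_zero

lemma tL_ne_zero : (tL k) ≠ 0 := by
  have := tL_zpow_ne_zero (k := k) 1
  simpa using this

lemma tL_zpow_order (m : ℤ) : (tL k ^ m : LaurentSeries k).order = m := by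
  rw [tL_zpow]; exact HahnSeries.order_single one_ne_zero

lemma mem_Rsub_iff {x : LaurentSeries k} : x ∈ Rsub k ↔ x = 0 ∨ 0 ≤ x.order := by
  constructor
  · rintro ⟨f, rfl⟩
    by_cases h : (HahnSeries.ofPowerSeries ℤ k f) = 0
    · exact Or.inl h
    · refine Or.inr (le_of_not_gt fun hlt => ?_)
      have h1 := HahnSeries.coeff_order_eq_zero.not.mpr h
      have h2 := PowerSeries.coeff_coe f ((HahnSeries.ofPowerSeries ℤ k f).order)
      rw [if_pos hlt] at h2
      exact h1 h2
  · rintro (rfl | h)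
    · exact zero_mem _
    · exact ⟨PowerSeries.X ^ x.order.toNat * x.powerSeriesPart,
        LaurentSeries.X_order_mul_powerSeriesPart (Int.toNat_of_nonneg h)⟩

lemma tL_zpow_mem {m : ℤ} (hm : 0 ≤ m) : (tL k ^ m : LaurentSeries k) ∈ Rsub k :=
  mem_Rsub_iff.mpr (Or.inr (by rw [tL_zpow_order]; exact hm))

lemma order_inv {x : LaurentSeries k} (hx : x ≠ 0) : (x⁻¹).order = -x.order := by
  have h0 : x⁻¹ ≠ 0 := inv_ne_zero hx
  have := HahnSeries.order_mul hx h0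
  rw [mul_inv_cancel₀ hx, HahnSeries.order_one] at this
  omega

/-- every nonzero element of `Rsub` is a unit times a nonneg power of `t`. -/
lemma exists_unit_tpow {x : LaurentSeries k} (hx : x ≠ 0) (hmem : x ∈ Rsub k) :
    ∃ (ν : ℕ) (u : LaurentSeries k), u ∈ Rsub k ∧ u⁻¹ ∈ Rsub k ∧ u ≠ 0 ∧
      x = u * tL k ^ (ν : ℤ) := by
  rcases mem_Rsub_iff.mp hmem with h | h
  · exact absurd h hx
  refine ⟨x.order.toNat, x * (tL k ^ x.order)⁻¹, ?_, ?_, ?_, ?_⟩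
  · have hne : (tL k ^ x.order : LaurentSeries k)⁻¹ ≠ 0 := inv_ne_zero (tL_zpow_ne_zero _)
    refine mem_Rsub_iff.mpr (Or.inr ?_)
    rw [HahnSeries.order_mul hx hne, order_inv (tL_zpow_ne_zero _), tL_zpow_order]
    omega
  · rw [mul_inv, inv_inv]
    have hne : x⁻¹ ≠ 0 := inv_ne_zero hx
    refine mem_Rsub_iff.mpr (Or.inr ?_)
    rw [HahnSeries.order_mul hne (tL_zpow_ne_zero _), order_inv hx, tL_zpow_order]
    omega
  · exact mul_ne_zero hx (inv_ne_zero (tL_zpow_ne_zero _))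
  · rw [Int.toNat_of_nonneg h, mul_assoc, inv_mul_cancel₀ (tL_zpow_ne_zero _), mul_one]

lemma order_of_unit {u v : LaurentSeries k} (hu : u ∈ Rsub k) (hv : v ∈ Rsub k)
    (huv : u * v = 1) : u.order = 0 := by
  have hu0 : u ≠ 0 := left_ne_zero_of_mul_eq_one huv
  have hv0 : v ≠ 0 := right_ne_zero_of_mul_eq_one huv
  have hsum := HahnSeries.order_mul hu0 hv0
  rw [huv, HahnSeries.order_one] at hsum
  rcases mem_Rsub_iff.mp hu with h | h; · exact absurd h hu0
  rcases mem_Rsub_iff.mp hv with h' | h'; · exact absurd h' hv0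
  omega

lemma tL_zpow_prod {n : ℕ} (f : Fin n → ℤ) (s : Finset (Fin n)) :
    ∏ i ∈ s, (tL k) ^ (f i) = (tL k) ^ (∑ i ∈ s, f i) := by
  classical
  induction s using Finset.induction_on with
  | empty => simp
  | insert _ _ hx ih =>
      rw [Finset.prod_insert hx, Finset.sum_insert hx, ih, ← zpow_add₀ tL_ne_zero]

instance : IsPrincipalIdealRing (Rsub k) := by
  have e : PowerSeries k ≃+* Rsub k :=
    RingEquiv.ofLeftInverse (f := HahnSeries.ofPowerSeries ℤ k)
      (Function.leftInverse_invFun HahnSeries.ofPowerSeries_injective)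
  exact IsPrincipalIdealRing.of_surjective e.toRingHom e.surjective

/-! ### Smith normal form over a PID -/

lemma matrix_snf {R : Type*} [CommRing R] [IsDomain R] [IsPrincipalIdealRing R] {n : ℕ}
    (B : Matrix (Fin n) (Fin n) R) (hB : B.det ≠ 0) :
    ∃ (P Q : Matrix (Fin n) (Fin n) R) (d : Fin n → R),
      IsUnit P ∧ IsUnit Q ∧ (∀ i, d i ≠ 0) ∧ B = P * Matrix.diagonal d * Q := by
  classical
  set φ : (Fin n → R) →ₗ[R] (Fin n → R) := Matrix.mulVecLin B with hφ
  have hinj : Function.Injective φ := by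
    rw [← LinearMap.ker_eq_bot, LinearMap.ker_eq_bot']
    intro v hv
    have h1 : (B.adjugate * B).mulVec v = 0 := by
      rw [← Matrix.mulVec_mulVec]
      simp only [hφ, Matrix.mulVecLin_apply] at hv
      rw [hv, Matrix.mulVec_zero]
    rw [Matrix.adjugate_mul, Matrix.smul_mulVec, Matrix.one_mulVec] at h1
    funext i
    have := congrFun h1 i
    simp only [Pi.smul_apply, smul_eq_mul, Pi.zero_apply] at this
    exact (mul_eq_zero.mp this).resolve_left hB
  set N : Submodule R (Fin n → R) := LinearMap.range φ with hN
  obtain ⟨m, snf⟩ := N.smithNormalForm (Pi.basisFun R (Fin n))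
  set e : (Fin n → R) ≃ₗ[R] N := LinearEquiv.ofInjective φ hinj with he
  set c : Module.Basis (Fin m) R (Fin n → R) := snf.bN.map e.symm with hc
  have hm : m = n := by
    have eqv := Module.Basis.indexEquiv c (Pi.basisFun R (Fin n))
    simpa using Fintype.card_congr eqv
  subst hm
  set σ : Equiv.Perm (Fin m) :=
    Equiv.ofBijective snf.f (Finite.injective_iff_bijective.mp snf.f.injective) with hσ
  set w : Module.Basis (Fin m) R (Fin m → R) := snf.bM.reindex σ.symm with hw
  have hwi : ∀ i, w i = snf.bM (snf.f i) := by
    intro i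
    rw [hw, Module.Basis.reindex_apply, Equiv.symm_symm]
    rfl
  have key : ∀ i, φ (c i) = snf.a i • w i := by
    intro i
    rw [hc, Module.Basis.map_apply]
    have : φ (e.symm (snf.bN i)) = ((e (e.symm (snf.bN i)) : N) : Fin m → R) := by
      rw [he]; rfl
    rw [this, e.apply_symm_apply, snf.snf i, hwi]
  have htm : LinearMap.toMatrix c w φ = Matrix.diagonal snf.a := by
    ext i j
    rw [LinearMap.toMatrix_apply, key j, map_smul, Module.Basis.repr_self, Matrix.diagonal_apply]
    by_cases h : i = j
    · simp [h, Finsupp.single_apply]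
    · simp only [h, if_false, Finsupp.smul_apply, Finsupp.single_apply, smul_eq_mul]
      rw [if_neg (fun h' : j = i => h h'.symm), mul_zero]
  set s : Module.Basis (Fin m) R (Fin m → R) := Pi.basisFun R (Fin m) with hs
  have hBmat : B = LinearMap.toMatrix s s φ := by
    rw [hs, LinearMap.toMatrix_eq_toMatrix', hφ]
    rw [show (Matrix.mulVecLin B) = Matrix.toLin' B from rfl, LinearMap.toMatrix'_toLin']
  have hfact : LinearMap.toMatrix s s φ =
      s.toMatrix w * LinearMap.toMatrix c w φ * c.toMatrix s := by
    rw [basis_toMatrix_mul_linearMap_toMatrix_mul_basis_toMatrix]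
  refine ⟨s.toMatrix w, c.toMatrix s, snf.a, ?_, ?_, ?_, ?_⟩
  · exact @isUnit_of_invertible _ _ _ (s.invertibleToMatrix w)
  · exact @isUnit_of_invertible _ _ _ (c.invertibleToMatrix s)
  · intro i h0
    have := snf.snf i
    rw [h0, zero_smul] at this
    exact Module.Basis.ne_zero snf.bN i (Subtype.coe_injective (by simpa using this))
  · rw [hBmat, hfact, htm]

/-! ### `Kset` lemmas -/

lemma entries_mem_mul {n : ℕ} {A B : Matrix (Fin n) (Fin n) (LaurentSeries k)}
    (hA : ∀ i j, A i j ∈ Rsub k) (hB : ∀ i j, B i j ∈ Rsub k) :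
    ∀ i j, (A * B) i j ∈ Rsub k := by
  intro i j
  rw [Matrix.mul_apply]
  exact Subring.sum_mem _ fun l _ => mul_mem (hA i l) (hB l j)

lemma Kset_mul {n : ℕ} {x y : Matrix (Fin n) (Fin n) (LaurentSeries k)}
    (hx : x ∈ Kset k n) (hy : y ∈ Kset k n) : x * y ∈ Kset k n := by
  obtain ⟨x', hx1, hx2, hx3, hx4⟩ := hx
  obtain ⟨y', hy1, hy2, hy3, hy4⟩ := hy
  refine ⟨y' * x', entries_mem_mul hx1 hy1, entries_mem_mul hy2 hx2, ?_, ?_⟩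
  · rw [mul_assoc, ← mul_assoc y, hy3, one_mul, hx3]
  · rw [mul_assoc, ← mul_assoc x', hx4, one_mul, hy4]

lemma det_mem_Rsub {n : ℕ} {A : Matrix (Fin n) (Fin n) (LaurentSeries k)}
    (hA : ∀ i j, A i j ∈ Rsub k) : A.det ∈ Rsub k := by
  rw [Matrix.det_apply]
  exact Subring.sum_mem _ fun σ _ =>
    zsmul_mem (Subring.prod_mem _ fun i _ => hA (σ i) i) _

lemma Kset_det {n : ℕ} {x : Matrix (Fin n) (Fin n) (LaurentSeries k)}
    (hx : x ∈ Kset k n) : x.det ≠ 0 ∧ x.det.order = 0 := by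
  obtain ⟨x', hx1, hx2, hx3, _⟩ := hx
  have hdet : x.det * x'.det = 1 := by rw [← Matrix.det_mul, hx3, Matrix.det_one]
  exact ⟨left_ne_zero_of_mul_eq_one hdet,
    order_of_unit (det_mem_Rsub hx1) (det_mem_Rsub hx2) hdet⟩

lemma submatrix_one_mem_Kset {n : ℕ} (τ : Equiv.Perm (Fin n)) :
    (1 : Matrix (Fin n) (Fin n) (LaurentSeries k)).submatrix τ (Equiv.refl (Fin n)) ∈ Kset k n ∧
    (1 : Matrix (Fin n) (Fin n) (LaurentSeries k)).submatrix (Equiv.refl (Fin n)) τ ∈ Kset k n := by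
  classical
  have hent : ∀ (f g : Fin n → Fin n) (i j : Fin n),
      ((1 : Matrix (Fin n) (Fin n) (LaurentSeries k)).submatrix f g) i j ∈ Rsub k := by
    intro f g i j
    rw [Matrix.submatrix_apply, Matrix.one_apply]
    split <;> simp [Subring.one_mem, Subring.zero_mem]
  have h1 : (1 : Matrix (Fin n) (Fin n) (LaurentSeries k)).submatrix τ (Equiv.refl (Fin n)) *
      (1 : Matrix (Fin n) (Fin n) (LaurentSeries k)).submatrix (Equiv.refl (Fin n)) τ = 1 := by
    rw [Matrix.submatrix_mul_equiv, one_mul, Matrix.submatrix_one_equiv]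
  have h2 : (1 : Matrix (Fin n) (Fin n) (LaurentSeries k)).submatrix (Equiv.refl (Fin n)) τ *
      (1 : Matrix (Fin n) (Fin n) (LaurentSeries k)).submatrix τ (Equiv.refl (Fin n)) = 1 := by
    rw [Matrix.submatrix_mul_equiv, one_mul, Matrix.submatrix_one_equiv]
  exact ⟨⟨_, hent _ _, hent _ _, h1, h2⟩, ⟨_, hent _ _, hent _ _, h2, h1⟩⟩

lemma diagonal_perm {n : ℕ} (v : Fin n → LaurentSeries k) (τ : Equiv.Perm (Fin n)) :
    Matrix.diagonal v =
      (1 : Matrix (Fin n) (Fin n) (LaurentSeries k)).submatrix (Equiv.refl (Fin n)) τ *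
        Matrix.diagonal (v ∘ τ) *
      (1 : Matrix (Fin n) (Fin n) (LaurentSeries k)).submatrix τ (Equiv.refl (Fin n)) := by
  classical
  have hd : Matrix.diagonal (v ∘ τ) =
      (Matrix.diagonal v).submatrix τ τ :=
    (Matrix.submatrix_diagonal v τ τ.injective).symm
  rw [hd]
  have h1 : ((1 : Matrix (Fin n) (Fin n) (LaurentSeries k)).submatrix (Equiv.refl (Fin n)) τ) *
      (Matrix.diagonal v).submatrix τ τ =
      ((1 : Matrix (Fin n) (Fin n) (LaurentSeries k)) * Matrix.diagonal v).submatrix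
        (Equiv.refl (Fin n)) τ := by
    rw [Matrix.submatrix_mul_equiv]
  rw [h1, one_mul]
  have h2 : (Matrix.diagonal v).submatrix (Equiv.refl (Fin n)) τ *
      ((1 : Matrix (Fin n) (Fin n) (LaurentSeries k)).submatrix τ (Equiv.refl (Fin n))) =
      (Matrix.diagonal v * 1).submatrix (Equiv.refl (Fin n)) (Equiv.refl (Fin n)) := by
    rw [Matrix.submatrix_mul_equiv]
  rw [h2, mul_one]
  ext i j
  simp

/-! ### sums of the target coweight -/

lemma target_sum (n a : ℕ) (j : Fin n) :
    ∑ i ∈ Finset.univ.filter (· ≤ j),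
        (if (i : ℕ) = 0 then ((n : ℤ) - 1) * a else -(a : ℤ)) =
      ((n : ℤ) - 1 - (j : ℕ)) * a := by
  classical
  haveI : NeZero n := ⟨fun h => (h ▸ j).elim0⟩
  have hset : Finset.univ.filter (· ≤ j) = Finset.Iic j := by
    ext i; simp
  rw [hset]
  have hfun : ∀ i ∈ Finset.Iic j,
      (if (i : ℕ) = 0 then ((n : ℤ) - 1) * a else -(a : ℤ)) =
      (if i = (0 : Fin n) then (n : ℤ) * a else 0) + (-(a : ℤ)) := by
    intro i _
    by_cases h : i = 0
    · simp only [h, Fin.val_zero, if_true, if_pos rfl]; ring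
    · rw [if_neg (fun hv => h (Fin.ext (by simpa using hv))), if_neg h, zero_add]
  rw [Finset.sum_congr rfl hfun, Finset.sum_add_distrib, Finset.sum_ite_eq',
    Finset.sum_const]
  have h0 : (0 : Fin n) ∈ Finset.Iic j := by simp
  rw [if_pos h0, Fin.card_Iic]
  push_cast
  ring

lemma target_total_sum (n a : ℕ) :
    ∑ i : Fin n, (if (i : ℕ) = 0 then ((n : ℤ) - 1) * a else -(a : ℤ)) = 0 := by
  classical
  rcases Nat.eq_zero_or_pos n with hn | hn
  · subst hn; simp
  obtain ⟨m, rfl⟩ := Nat.exists_eq_succ_of_ne_zero hn.ne'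
  have huniv : (Finset.univ : Finset (Fin (m + 1))) =
      Finset.univ.filter (· ≤ Fin.last m) := by
    ext i; simp [Fin.le_last]
  rw [huniv, target_sum (m + 1) a (Fin.last m)]
  simp [Fin.last]

lemma mat_mul_smul {n : ℕ} (x N : Matrix (Fin n) (Fin n) (LaurentSeries k))
    (c : LaurentSeries k) : x * (c • N) = c • (x * N) := by
  refine Matrix.ext fun i j => ?_
  simp only [Matrix.mul_apply, Matrix.smul_apply, smul_eq_mul, Finset.mul_sum]
  exact Finset.sum_congr rfl fun l _ => by ring

lemma mat_smul_mul {n : ℕ} (x N : Matrix (Fin n) (Fin n) (LaurentSeries k))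
    (c : LaurentSeries k) : (c • x) * N = c • (x * N) := by
  refine Matrix.ext fun i j => ?_
  simp only [Matrix.mul_apply, Matrix.smul_apply, smul_eq_mul, Finset.mul_sum]
  exact Finset.sum_congr rfl fun l _ => by ring

lemma Dmat_smul {n : ℕ} (m : ℤ) (μ : Fin n → ℤ) :
    (tL k ^ m) • Dmat k n μ = Dmat k n (fun i => μ i + m) := by
  ext i j
  rw [Matrix.smul_apply, Dmat, Dmat, Matrix.diagonal_apply, Matrix.diagonal_apply]
  by_cases h : i = j
  · rw [if_pos h, if_pos h, smul_eq_mul, ← zpow_add₀ tL_ne_zero, add_comm]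
  · rw [if_neg h, if_neg h, smul_zero]

lemma smul_mul_Dmat_mul {n : ℕ} (m : ℤ) (μ : Fin n → ℤ)
    (x y : Matrix (Fin n) (Fin n) (LaurentSeries k)) :
    (tL k ^ m) • (x * Dmat k n μ * y) = x * Dmat k n (fun i => μ i + m) * y := by
  rw [← Dmat_smul, mat_mul_smul, mat_smul_mul]

/-! ### The main theorem -/

set_option maxHeartbeats 2000000 in
/-- Claim from the proof that `S_λ = colim S_{λ,η}`: let `a ≥ 0` and let
`A ∈ GLₙ(k((t)))` with `v(det A) = 0`. Then all entries of `A` have `t`-adic valuation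
`≥ −a` if and only if `A ∈ K·D(μ')·K` for some dominant `μ' ≤ ((n−1)a, −a, …, −a)`. -/
theorem entries_valuation_iff_cartan_le {k : Type} [Field k] (n : ℕ) (a : ℕ)
    (A : Matrix (Fin n) (Fin n) (LaurentSeries k)) (hA : IsUnit A)
    (hdet : A.det.order = 0) :
    (∀ i j, (tL k) ^ (a : ℤ) * A i j ∈ Rsub k) ↔
      ∃ μ' : Fin n → ℤ, DominantT μ' ∧
        leT μ' (fun i => if (i : ℕ) = 0 then ((n : ℤ) - 1) * a else -(a : ℤ)) ∧
        ∃ k₁ ∈ Kset k n, ∃ k₂ ∈ Kset k n, A = k₁ * Dmat k n μ' * k₂ := by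
  classical
  constructor
  · -- Forward direction
    intro h
    have hdetA : A.det ≠ 0 := ((Matrix.isUnit_iff_isUnit_det A).mp hA).ne_zero
    set M : Matrix (Fin n) (Fin n) (LaurentSeries k) := (tL k ^ (a : ℤ)) • A with hM
    have hMent : ∀ i j, M i j ∈ Rsub k := by
      intro i j
      have : M i j = tL k ^ (a : ℤ) * A i j := by
        rw [hM, Matrix.smul_apply, smul_eq_mul]
      rw [this]; exact h i j
    have hMdet : M.det = (tL k ^ (a : ℤ)) ^ n * A.det := by
      rw [hM, Matrix.det_smul, Fintype.card_fin]
    have hMdet0 : M.det ≠ 0 :=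
      hMdet ▸ mul_ne_zero (pow_ne_zero _ (tL_zpow_ne_zero _)) hdetA
    have hMorder : M.det.order = (n : ℤ) * a := by
      rw [hMdet, HahnSeries.order_mul (pow_ne_zero _ (tL_zpow_ne_zero _)) hdetA, hdet,
        add_zero, ← zpow_natCast (tL k ^ (a : ℤ)) n, ← zpow_mul, tL_zpow_order]
      ring
    -- lift to a matrix over the subring
    set B : Matrix (Fin n) (Fin n) (Rsub k) := fun i j => ⟨M i j, hMent i j⟩ with hB
    have hBmap : B.map ((Rsub k).subtype) = M := by
      ext i j; rfl
    have hBdet : B.det ≠ 0 := by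
      intro h0
      have : ((Rsub k).subtype) B.det = M.det := by
        rw [RingHom.map_det, RingHom.mapMatrix_apply, hBmap]
      rw [h0, map_zero] at this
      exact hMdet0 this.symm
    obtain ⟨P, Q, d, hP, hQ, hd, hPQ⟩ := matrix_snf B hBdet
    -- push the factorization into the Laurent series field
    have hMfact : M = P.map ((Rsub k).subtype) *
        (Matrix.diagonal fun i => ((d i : LaurentSeries k))) * Q.map ((Rsub k).subtype) := by
      rw [← hBmap, hPQ, Matrix.map_mul, Matrix.map_mul,
        Matrix.diagonal_map (by simp : ((Rsub k).subtype) 0 = 0)]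
      rfl
    have hunitmap : ∀ (X : Matrix (Fin n) (Fin n) (Rsub k)), IsUnit X →
        X.map ((Rsub k).subtype) ∈ Kset k n := by
      intro X hX
      obtain ⟨u, rfl⟩ := hX
      refine ⟨(↑u⁻¹ : Matrix (Fin n) (Fin n) (Rsub k)).map ((Rsub k).subtype),
        fun i j => SetLike.coe_mem _, fun i j => SetLike.coe_mem _, ?_, ?_⟩
      · rw [← Matrix.map_mul, u.mul_inv, Matrix.map_one _ (map_zero _) (map_one _)]
      · rw [← Matrix.map_mul, u.inv_mul, Matrix.map_one _ (map_zero _) (map_one _)]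
    -- decompose the diagonal entries into units times powers of t
    have hdd : ∀ i, ((d i : LaurentSeries k)) ≠ 0 := by
      intro i h0
      exact hd i (Subtype.coe_injective (by simpa using h0))
    choose ν u hu1 hu2 hu3 hu4 using fun i =>
      exists_unit_tpow (hdd i) (SetLike.coe_mem (d i))
    have hdiag : (Matrix.diagonal fun i => ((d i : LaurentSeries k))) =
        Matrix.diagonal u * Dmat k n (fun i => (ν i : ℤ)) := by
      rw [Dmat, Matrix.diagonal_mul_diagonal]
      exact congrArg _ (funext fun i => hu4 i)
    have hdiagu : Matrix.diagonal u ∈ Kset k n := by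
      refine ⟨Matrix.diagonal (fun i => (u i)⁻¹), ?_, ?_, ?_, ?_⟩
      · intro i j
        rw [Matrix.diagonal_apply]
        split
        · exact hu1 _
        · exact zero_mem _
      · intro i j
        rw [Matrix.diagonal_apply]
        split
        · exact hu2 _
        · exact zero_mem _
      · rw [Matrix.diagonal_mul_diagonal]
        convert Matrix.diagonal_one using 2
        exact funext fun i => mul_inv_cancel₀ (hu3 i)
      · rw [Matrix.diagonal_mul_diagonal]
        convert Matrix.diagonal_one using 2
        exact funext fun i => inv_mul_cancel₀ (hu3 i)
    set K₁ : Matrix (Fin n) (Fin n) (LaurentSeries k) :=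
      P.map ((Rsub k).subtype) * Matrix.diagonal u with hK₁
    set K₂ : Matrix (Fin n) (Fin n) (LaurentSeries k) := Q.map ((Rsub k).subtype) with hK₂
    have hK₁mem : K₁ ∈ Kset k n := Kset_mul (hunitmap P hP) hdiagu
    have hK₂mem : K₂ ∈ Kset k n := hunitmap Q hQ
    have hMfact2 : M = K₁ * Dmat k n (fun i => (ν i : ℤ)) * K₂ := by
      rw [hK₁, hK₂, hMfact, hdiag, ← mul_assoc]
    -- compute the sum of the ν i
    have hsumν : ∑ i, (ν i : ℤ) = (n : ℤ) * a := by
      have hDdet : (Dmat k n (fun i => (ν i : ℤ))).det = tL k ^ (∑ i, (ν i : ℤ)) := by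
        rw [Dmat, Matrix.det_diagonal, tL_zpow_prod]
      have hdet2 : M.det = K₁.det * (Dmat k n (fun i => (ν i : ℤ))).det * K₂.det := by
        rw [hMfact2, Matrix.det_mul, Matrix.det_mul]
      have h1 := Kset_det hK₁mem
      have h2 := Kset_det hK₂mem
      have horder : M.det.order = (∑ i, (ν i : ℤ)) := by
        rw [hdet2, hDdet,
          HahnSeries.order_mul (mul_ne_zero h1.1 (tL_zpow_ne_zero _)) h2.1,
          HahnSeries.order_mul h1.1 (tL_zpow_ne_zero _), h1.2, h2.2, tL_zpow_order]
        ring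
      rw [hMorder] at horder
      omega
    -- recover A
    have hAfact : A = K₁ * Dmat k n (fun i => (ν i : ℤ) - a) * K₂ := by
      have h1 : A = (tL k ^ (-(a : ℤ))) • M := by
        rw [hM, zpow_neg, inv_smul_smul₀ (tL_zpow_ne_zero _)]
      rw [h1, hMfact2, smul_mul_Dmat_mul]
      simp only [sub_eq_add_neg]
    -- sort
    set μ₀ : Fin n → ℤ := fun i => (ν i : ℤ) - a with hμ₀
    set τ : Equiv.Perm (Fin n) := Tuple.sort (fun i => -μ₀ i) with hτ
    have hmono := Tuple.monotone_sort (fun i => -μ₀ i)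
    refine ⟨μ₀ ∘ τ, ?_, ?_, ?_⟩
    · intro i j hij
      have := hmono hij
      simp only [Function.comp_apply] at this ⊢
      rw [← hτ] at this
      omega
    · constructor
      · intro j
        have hbnd : ∀ i, -(a : ℤ) ≤ (μ₀ ∘ τ) i := by
          intro i
          simp only [Function.comp_apply, hμ₀]
          have : (0 : ℤ) ≤ (ν (τ i) : ℤ) := Int.natCast_nonneg _
          omega
        have htot : ∑ i, (μ₀ ∘ τ) i = 0 := by
          have e1 : ∑ i, (μ₀ ∘ τ) i = ∑ i, μ₀ i := Equiv.sum_comp τ μ₀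
          rw [e1, hμ₀]
          rw [Finset.sum_sub_distrib, hsumν, Finset.sum_const, Finset.card_univ,
            Fintype.card_fin]
          simp [mul_comm]
        have hsplit := Finset.sum_filter_add_sum_filter_not Finset.univ (· ≤ j) (μ₀ ∘ τ)
        have hcard : (Finset.univ.filter (fun i => ¬ (i ≤ j))).card = n - ((j : ℕ) + 1) := by
          have h1 : (Finset.univ.filter (· ≤ j)).card = (j : ℕ) + 1 := by
            rw [show Finset.univ.filter (· ≤ j) = Finset.Iic j from by ext i; simp,
              Fin.card_Iic]
          have h2 := Finset.card_filter_add_card_filter_not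
            (s := (Finset.univ : Finset (Fin n))) (p := (· ≤ j))
          rw [Finset.card_univ, Fintype.card_fin] at h2
          omega
        have hlow : ((Finset.univ.filter (fun i => ¬ (i ≤ j))).card : ℤ) * (-(a : ℤ)) ≤
            ∑ i ∈ Finset.univ.filter (fun i => ¬ (i ≤ j)), (μ₀ ∘ τ) i := by
          have := Finset.card_nsmul_le_sum (Finset.univ.filter (fun i => ¬ (i ≤ j)))
            (μ₀ ∘ τ) (-(a : ℤ)) (fun i _ => hbnd i)
          simpa [nsmul_eq_mul] using this
        refine le_trans ?_ (le_of_eq (target_sum n a j).symm)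
        have hjlt : (j : ℕ) < n := j.2
        rw [hcard] at hlow
        have hc : ((n - ((j : ℕ) + 1) : ℕ) : ℤ) = (n : ℤ) - (j : ℕ) - 1 := by
          omega
        rw [hc] at hlow
        have : ∑ i ∈ Finset.univ.filter (· ≤ j), (μ₀ ∘ τ) i =
            -∑ i ∈ Finset.univ.filter (fun i => ¬ (i ≤ j)), (μ₀ ∘ τ) i := by
          omega
        rw [this]
        nlinarith [hlow]
      · have e1 : ∑ i, (μ₀ ∘ τ) i = ∑ i, μ₀ i := Equiv.sum_comp τ μ₀
        refine Eq.trans e1 (Eq.trans ?_ (target_total_sum n a).symm)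
        rw [hμ₀, Finset.sum_sub_distrib, hsumν, Finset.sum_const, Finset.card_univ,
          Fintype.card_fin]
        simp [mul_comm]
    · obtain ⟨hl, hr⟩ := submatrix_one_mem_Kset (k := k) τ
      refine ⟨K₁ * (1 : Matrix (Fin n) (Fin n) (LaurentSeries k)).submatrix
          (Equiv.refl (Fin n)) τ, Kset_mul hK₁mem hr,
        (1 : Matrix (Fin n) (Fin n) (LaurentSeries k)).submatrix τ (Equiv.refl (Fin n)) * K₂,
        Kset_mul hl hK₂mem, ?_⟩
      have hperm := diagonal_perm (fun i => tL k ^ (μ₀ i)) τ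
      have hDD : Dmat k n μ₀ = Matrix.diagonal (fun i => tL k ^ (μ₀ i)) := rfl
      have hDD2 : Dmat k n (μ₀ ∘ τ) =
          Matrix.diagonal ((fun i => tL k ^ (μ₀ i)) ∘ τ) := rfl
      rw [hAfact, hDD, hperm, ← hDD2]
      simp only [mul_assoc]
  · -- Reverse direction
    rintro ⟨μ', hdom, hle, k₁, hk₁, k₂, hk₂, hAeq⟩
    intro i j
    have hn : 0 < n := i.pos
    obtain ⟨nn, rfl⟩ : ∃ nn, n = nn + 1 := ⟨n - 1, by omega⟩
    have hbound : ∀ i', -(a : ℤ) ≤ μ' i' := by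
      have hlast : -(a : ℤ) ≤ μ' (Fin.last nn) := by
        by_cases hn1 : nn = 0
        · subst hn1
          have huniq : ∀ b : Fin 1, b = Fin.last 0 := fun b => Fin.ext (by omega)
          have huniv : (Finset.univ : Finset (Fin 1)) = {Fin.last 0} := by
            ext b; simp [huniq b]
          have h2 : ∑ i', μ' i' = 0 := hle.2.trans (target_total_sum 1 a)
          rw [huniv, Finset.sum_singleton] at h2
          omega
        · set j₀ : Fin (nn + 1) := ⟨nn - 1, by omega⟩ with hj₀
          have hjval : ((j₀ : Fin (nn + 1)) : ℕ) = nn - 1 := rfl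
          have hps := le_trans (hle.1 j₀) (le_of_eq (target_sum (nn + 1) a j₀))
          rw [hjval] at hps
          have hcompl : Finset.univ.filter (fun i' => ¬ (i' ≤ j₀)) = {Fin.last nn} := by
            ext b
            have hb := b.isLt
            simp only [Finset.mem_filter, Finset.mem_univ, true_and, Finset.mem_singleton,
              Fin.le_def, Fin.ext_iff, Fin.val_last, hjval]
            omega
          have hsplit := Finset.sum_filter_add_sum_filter_not Finset.univ (· ≤ j₀) μ'
          have h2 : ∑ i', μ' i' = 0 := hle.2.trans (target_total_sum (nn + 1) a)
          rw [hcompl, Finset.sum_singleton, h2] at hsplit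
          have hcast : ((nn - 1 : ℕ) : ℤ) = (nn : ℤ) - 1 := by omega
          rw [hcast] at hps
          have hps2 : ∑ i' ∈ Finset.univ.filter (· ≤ j₀), μ' i' ≤ a := by
            calc ∑ i' ∈ Finset.univ.filter (· ≤ j₀), μ' i'
                ≤ ((((nn : ℕ) + 1 : ℕ) : ℤ) - 1 - ((nn : ℤ) - 1)) * a := hps
              _ = a := by push_cast; ring
          omega
      intro i'
      exact le_trans hlast (hdom i' (Fin.last nn) (Fin.le_last i'))
    obtain ⟨k₁', h₁a, h₁b, h₁c, h₁d⟩ := hk₁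
    obtain ⟨k₂', h₂a, h₂b, h₂c, h₂d⟩ := hk₂
    have hD : ∀ i' j', Dmat k (nn + 1) (fun i'' => μ' i'' + a) i' j' ∈ Rsub k := by
      intro i' j'
      rw [Dmat, Matrix.diagonal_apply]
      split
      · exact tL_zpow_mem (by have := hbound i'; omega)
      · exact zero_mem _
    have hsm : (tL k ^ (a : ℤ)) • A = k₁ * Dmat k (nn + 1) (fun i'' => μ' i'' + a) * k₂ := by
      rw [hAeq, smul_mul_Dmat_mul]
    have : tL k ^ (a : ℤ) * A i j = (k₁ * Dmat k (nn + 1) (fun i'' => μ' i'' + a) * k₂) i j := by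
      rw [← hsm, Matrix.smul_apply, smul_eq_mul]
    rw [this]
    exact entries_mem_mul (entries_mem_mul h₁a hD) h₂a i j

end
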